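/- Let N₁ = (1−ε₁)D₁ + ε₁R_{σ₁} and N₂ = (1−ε₂)D₂ + ε₂R_{σ₂} where Dᵢ are quantum channels, σᵢ density matrices, εᵢ ∈ [0,1]. Then the tensor product N₁ ⊗ N₂ can be written as (1−ε₁ε₂)·D + ε₁ε₂·R_σ for some quantum channel D and density matrix σ. (Super-multiplicativity of the quantum Doeblin coefficient.) -/

import Mathlib

open Matrix
open scoped ComplexOrder

noncomputable def trNorm {n : Type*} [Fintype n] [DecidableEq n] (A : Matrix n n ℂ) : ℝ :=
  ∑ i, Real.sqrt ((Matrix.isHermitian_conjTranspose_mul_self A).eigenvalues i)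

noncomputable def choi {m n : Type*} [Fintype m] [DecidableEq m] [Fintype n]
    (Φ : Matrix m m ℂ →ₗ[ℂ] Matrix n n ℂ) : Matrix (m × n) (m × n) ℂ :=
  Matrix.of fun p q => Φ (Matrix.single p.1 q.1 1) p.2 q.2

def IsCP {m n : Type*} [Fintype m] [DecidableEq m] [Fintype n]
    (Φ : Matrix m m ℂ →ₗ[ℂ] Matrix n n ℂ) : Prop := (choi Φ).PosSemidef

def IsTP {m n : Type*} [Fintype m] [Fintype n]
    (Φ : Matrix m m ℂ →ₗ[ℂ] Matrix n n ℂ) : Prop := ∀ A, (Φ A).trace = A.trace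

def IsDensity {n : Type*} [Fintype n] (ρ : Matrix n n ℂ) : Prop :=
  ρ.PosSemidef ∧ ρ.trace = 1

noncomputable def replacer {m n : Type*} [Fintype m] (σ : Matrix n n ℂ) :
    Matrix m m ℂ →ₗ[ℂ] Matrix n n ℂ where
  toFun A := A.trace • σ
  map_add' A B := by simp [Matrix.trace_add, add_smul]
  map_smul' c A := by simp [Matrix.trace_smul, smul_smul]

/-! ### Auxiliary lemmas -/

open scoped Kronecker

lemma kron_conjT {m n m' n' : Type*} (A : Matrix m n ℂ) (B : Matrix m' n' ℂ) :
    (A ⊗ₖ B)ᴴ = Aᴴ ⊗ₖ Bᴴ := by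
  ext ⟨i,k⟩ ⟨j,l⟩
  simp [Matrix.conjTranspose_apply, Matrix.kroneckerMap_apply]

lemma kron_psd {m m' : Type*} [Fintype m] [Fintype m'] {A : Matrix m m ℂ} {B : Matrix m' m' ℂ}
    (hA : A.PosSemidef) (hB : B.PosSemidef) : (A ⊗ₖ B).PosSemidef := by
  exact hA.kronecker hB

lemma psd_real_smul {m : Type*} [Fintype m] {M : Matrix m m ℂ} (hM : M.PosSemidef)
    {r : ℝ} (hr : 0 ≤ r) : ((r : ℂ) • M).PosSemidef := by
  constructor
  · unfold Matrix.IsHermitian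
    rw [Matrix.conjTranspose_smul, hM.1.eq]
    congr 1
    simp
  · intro x
    exact (hM.smul (a := (r : ℂ)) (by exact_mod_cast hr)).2 x

/-- The tensor product of two superoperators. -/
noncomputable def tmap {m n : Type*} [Fintype m] [DecidableEq m] [Fintype n] [DecidableEq n]
    (Φ : Matrix m m ℂ →ₗ[ℂ] Matrix m m ℂ) (Ψ : Matrix n n ℂ →ₗ[ℂ] Matrix n n ℂ) :
    Matrix (m × n) (m × n) ℂ →ₗ[ℂ] Matrix (m × n) (m × n) ℂ where
  toFun M := ∑ i, ∑ j, ∑ k, ∑ l, M (i,k) (j,l) •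
      (Φ (Matrix.single i j 1)) ⊗ₖ (Ψ (Matrix.single k l 1))
  map_add' M N := by simp [Matrix.add_apply, add_smul, Finset.sum_add_distrib]
  map_smul' c M := by simp [Matrix.smul_apply, smul_smul, Finset.smul_sum]

lemma tmap_apply {m n : Type*} [Fintype m] [DecidableEq m] [Fintype n] [DecidableEq n]
    (Φ : Matrix m m ℂ →ₗ[ℂ] Matrix m m ℂ) (Ψ : Matrix n n ℂ →ₗ[ℂ] Matrix n n ℂ)
    (M : Matrix (m × n) (m × n) ℂ) :
    tmap Φ Ψ M = ∑ i, ∑ j, ∑ k, ∑ l, M (i,k) (j,l) •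
      (Φ (Matrix.single i j 1)) ⊗ₖ (Ψ (Matrix.single k l 1)) := rfl

lemma lmap_eq_sum {m n : Type*} [Fintype m] [DecidableEq m] [Fintype n]
    (Φ : Matrix m m ℂ →ₗ[ℂ] Matrix n n ℂ) (A : Matrix m m ℂ) :
    Φ A = ∑ i, ∑ j, A i j • Φ (Matrix.single i j 1) := by
  nth_rewrite 1 [Matrix.matrix_eq_sum_single A]
  rw [map_sum]
  refine Finset.sum_congr rfl fun i _ => ?_
  rw [map_sum]
  refine Finset.sum_congr rfl fun j _ => ?_
  rw [← Φ.map_smul, Matrix.smul_single, smul_eq_mul, mul_one]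

lemma tmap_kron {m n : Type*} [Fintype m] [DecidableEq m] [Fintype n] [DecidableEq n]
    (Φ : Matrix m m ℂ →ₗ[ℂ] Matrix m m ℂ) (Ψ : Matrix n n ℂ →ₗ[ℂ] Matrix n n ℂ)
    (A : Matrix m m ℂ) (B : Matrix n n ℂ) :
    tmap Φ Ψ (A ⊗ₖ B) = (Φ A) ⊗ₖ (Ψ B) := by
  rw [lmap_eq_sum Φ A, lmap_eq_sum Ψ B, tmap_apply]
  ext ⟨i₂, k₂⟩ ⟨j₂, l₂⟩
  have key : ∀ (x : m → m → ℂ) (y : n → n → ℂ),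
      (∑ i, ∑ j, ∑ k, ∑ l, (A i j * B k l) * (x i j * y k l))
        = (∑ i, ∑ j, A i j * x i j) * (∑ k, ∑ l, B k l * y k l) := by
    intro x y
    rw [Finset.sum_mul_sum]
    refine Finset.sum_congr rfl fun i _ => ?_
    conv_lhs => rw [Finset.sum_comm]
    refine Finset.sum_congr rfl fun k _ => ?_
    rw [Finset.sum_mul_sum]
    exact Finset.sum_congr rfl fun j _ => Finset.sum_congr rfl fun l _ => by ring
  simpa only [Matrix.sum_apply, Matrix.smul_apply, Matrix.kroneckerMap_apply, smul_eq_mul]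
    using key (fun i j => Φ (Matrix.single i j 1) i₂ j₂)
      (fun k l => Ψ (Matrix.single k l 1) k₂ l₂)

lemma stdBasis_prod {m n : Type*} [DecidableEq m] [DecidableEq n] (i j : m) (k l : n) :
    (Matrix.single ((i,k)) ((j,l)) (1:ℂ)) =
      (Matrix.single i j (1:ℂ)) ⊗ₖ (Matrix.single k l (1:ℂ)) := by
  ext ⟨a,b⟩ ⟨c,d⟩
  simp only [Matrix.single, Matrix.of_apply, Matrix.kroneckerMap_apply, Prod.mk.injEq,
    ite_mul, one_mul, zero_mul]
  aesop

lemma choi_tmap {m n : Type*} [Fintype m] [DecidableEq m] [Fintype n] [DecidableEq n]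
    (Φ : Matrix m m ℂ →ₗ[ℂ] Matrix m m ℂ) (Ψ : Matrix n n ℂ →ₗ[ℂ] Matrix n n ℂ) :
    choi (tmap Φ Ψ) = ((choi Φ) ⊗ₖ (choi Ψ)).submatrix
      (fun p : (m × n) × (m × n) => ((p.1.1, p.2.1), (p.1.2, p.2.2)))
      (fun p : (m × n) × (m × n) => ((p.1.1, p.2.1), (p.1.2, p.2.2))) := by
  ext ⟨⟨i,k⟩,⟨i₂,k₂⟩⟩ ⟨⟨j,l⟩,⟨j₂,l₂⟩⟩
  simp only [choi, Matrix.of_apply, Matrix.submatrix_apply, Matrix.kroneckerMap_apply,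
    stdBasis_prod, tmap_kron]

lemma isCP_tmap {m n : Type*} [Fintype m] [DecidableEq m] [Fintype n] [DecidableEq n]
    {Φ : Matrix m m ℂ →ₗ[ℂ] Matrix m m ℂ} {Ψ : Matrix n n ℂ →ₗ[ℂ] Matrix n n ℂ}
    (hΦ : IsCP Φ) (hΨ : IsCP Ψ) : IsCP (tmap Φ Ψ) := by
  rw [IsCP, choi_tmap]
  exact (kron_psd hΦ hΨ).submatrix _

lemma trace_stdBasisMatrix' {p : Type*} [Fintype p] [DecidableEq p] (i j : p) :
    (Matrix.single i j (1:ℂ)).trace = if i = j then 1 else 0 := by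
  by_cases h : i = j
  · subst h; simp [Matrix.trace_single_eq_same]
  · simp [h, Matrix.trace_single_eq_of_ne (h := h)]

lemma isTP_tmap {m n : Type*} [Fintype m] [DecidableEq m] [Fintype n] [DecidableEq n]
    {Φ : Matrix m m ℂ →ₗ[ℂ] Matrix m m ℂ} {Ψ : Matrix n n ℂ →ₗ[ℂ] Matrix n n ℂ}
    (hΦ : IsTP Φ) (hΨ : IsTP Ψ) : IsTP (tmap Φ Ψ) := by
  intro M
  rw [tmap_apply]
  simp only [Matrix.trace_sum, Matrix.trace_smul, Matrix.trace_kronecker, hΦ _, hΨ _]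
  simp only [trace_stdBasisMatrix', mul_ite, mul_one, mul_zero]
  simp only [smul_eq_mul, mul_ite, mul_one, mul_zero]
  simp only [Finset.sum_ite_eq, Finset.mem_univ, if_true]
  rw [Matrix.trace]
  simp [Matrix.diag, Fintype.sum_prod_type]

lemma choi_replacer {m n : Type*} [Fintype m] [DecidableEq m] [Fintype n] [DecidableEq n]
    (σ : Matrix n n ℂ) :
    choi (replacer (m := m) σ) = (1 : Matrix m m ℂ) ⊗ₖ σ := by
  ext ⟨i,i₂⟩ ⟨j,j₂⟩
  by_cases h : i = j
  · subst h
    simp [choi, replacer, Matrix.trace_single_eq_same, Matrix.one_apply]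
  · simp [choi, replacer, Matrix.trace_single_eq_of_ne (h := h),
      Matrix.one_apply, h]

lemma isCP_replacer {m n : Type*} [Fintype m] [DecidableEq m] [Fintype n] [DecidableEq n]
    {σ : Matrix n n ℂ} (hσ : σ.PosSemidef) : IsCP (replacer (m := m) σ) := by
  rw [IsCP, choi_replacer]
  exact kron_psd Matrix.PosSemidef.one hσ

lemma isTP_replacer {m n : Type*} [Fintype m] [Fintype n]
    {σ : Matrix n n ℂ} (hσ : σ.trace = 1) : IsTP (replacer (m := m) σ) := by
  intro A
  show (A.trace • σ).trace = A.trace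
  rw [Matrix.trace_smul, hσ, smul_eq_mul, mul_one]

lemma choi_add {m n : Type*} [Fintype m] [DecidableEq m] [Fintype n]
    (Φ Ψ : Matrix m m ℂ →ₗ[ℂ] Matrix n n ℂ) : choi (Φ + Ψ) = choi Φ + choi Ψ := by
  ext p q; simp [choi]

lemma choi_smul {m n : Type*} [Fintype m] [DecidableEq m] [Fintype n]
    (c : ℂ) (Φ : Matrix m m ℂ →ₗ[ℂ] Matrix n n ℂ) : choi (c • Φ) = c • choi Φ := by
  ext p q; simp [choi]

lemma replacer_apply {m n : Type*} [Fintype m] (σ : Matrix n n ℂ) (A : Matrix m m ℂ) :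
    replacer σ A = A.trace • σ := rfl

theorem stmt13 {d₁ d₂ : ℕ}
    (N₁ D₁ : Matrix (Fin d₁) (Fin d₁) ℂ →ₗ[ℂ] Matrix (Fin d₁) (Fin d₁) ℂ)
    (N₂ D₂ : Matrix (Fin d₂) (Fin d₂) ℂ →ₗ[ℂ] Matrix (Fin d₂) (Fin d₂) ℂ)
    (σ₁ : Matrix (Fin d₁) (Fin d₁) ℂ) (σ₂ : Matrix (Fin d₂) (Fin d₂) ℂ)
    (ε₁ ε₂ : ℝ) (hε₁ : ε₁ ∈ Set.Icc (0:ℝ) 1) (hε₂ : ε₂ ∈ Set.Icc (0:ℝ) 1)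
    (hN₁cp : IsCP N₁) (hN₁tp : IsTP N₁) (hN₂cp : IsCP N₂) (hN₂tp : IsTP N₂)
    (hD₁cp : IsCP D₁) (hD₁tp : IsTP D₁) (hD₂cp : IsCP D₂) (hD₂tp : IsTP D₂)
    (hσ₁ : IsDensity σ₁) (hσ₂ : IsDensity σ₂)
    (hdec₁ : ∀ A, N₁ A = (1 - (ε₁ : ℂ)) • D₁ A + (ε₁ : ℂ) • (A.trace • σ₁))
    (hdec₂ : ∀ B, N₂ B = (1 - (ε₂ : ℂ)) • D₂ B + (ε₂ : ℂ) • (B.trace • σ₂)) :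
    ∃ (D : Matrix (Fin d₁ × Fin d₂) (Fin d₁ × Fin d₂) ℂ →ₗ[ℂ]
            Matrix (Fin d₁ × Fin d₂) (Fin d₁ × Fin d₂) ℂ)
      (σ : Matrix (Fin d₁ × Fin d₂) (Fin d₁ × Fin d₂) ℂ),
      IsCP D ∧ IsTP D ∧ IsDensity σ ∧
      ∀ (A : Matrix (Fin d₁) (Fin d₁) ℂ) (B : Matrix (Fin d₂) (Fin d₂) ℂ),
        Matrix.kroneckerMap (· * ·) (N₁ A) (N₂ B)
          = (1 - ((ε₁ * ε₂ : ℝ) : ℂ)) • D (Matrix.kroneckerMap (· * ·) A B)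
            + ((ε₁ * ε₂ : ℝ) : ℂ) • ((Matrix.kroneckerMap (· * ·) A B).trace • σ) := by
  obtain ⟨hε₁0, hε₁1⟩ := hε₁
  obtain ⟨hε₂0, hε₂1⟩ := hε₂
  have hσden : IsDensity (σ₁ ⊗ₖ σ₂) :=
    ⟨kron_psd hσ₁.1 hσ₂.1, by rw [Matrix.trace_kronecker, hσ₁.2, hσ₂.2, mul_one]⟩
  by_cases hone : ε₁ * ε₂ = 1
  · have h1 : ε₁ = 1 := by nlinarith
    have h2 : ε₂ = 1 := by nlinarith
    refine ⟨tmap D₁ D₂, σ₁ ⊗ₖ σ₂, isCP_tmap hD₁cp hD₂cp, isTP_tmap hD₁tp hD₂tp, hσden, ?_⟩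
    intro A B
    subst h1 h2
    rw [hdec₁ A, hdec₂ B]
    norm_num
    rw [Matrix.smul_kronecker, Matrix.kronecker_smul, Matrix.trace_kronecker, smul_smul]
  · have hlt : ε₁ * ε₂ < 1 :=
      lt_of_le_of_ne (by nlinarith) hone
    have ht : (0:ℝ) < 1 - ε₁ * ε₂ := by linarith
    have htC : ((1 - ε₁ * ε₂ : ℝ) : ℂ) ≠ 0 := by
      exact_mod_cast ht.ne'
    refine ⟨(((1 - ε₁) * (1 - ε₂) / (1 - ε₁ * ε₂) : ℝ) : ℂ) • tmap D₁ D₂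
        + (((1 - ε₁) * ε₂ / (1 - ε₁ * ε₂) : ℝ) : ℂ) • tmap D₁ (replacer σ₂)
        + ((ε₁ * (1 - ε₂) / (1 - ε₁ * ε₂) : ℝ) : ℂ) • tmap (replacer σ₁) D₂,
      σ₁ ⊗ₖ σ₂, ?_, ?_, hσden, ?_⟩
    · rw [IsCP, choi_add, choi_add, choi_smul, choi_smul, choi_smul]
      have p₁ := psd_real_smul (r := (1 - ε₁) * (1 - ε₂) / (1 - ε₁ * ε₂)) (isCP_tmap hD₁cp hD₂cp)
        (div_nonneg (mul_nonneg (by linarith) (by linarith)) ht.le)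
      have p₂ := psd_real_smul (r := (1 - ε₁) * ε₂ / (1 - ε₁ * ε₂)) (isCP_tmap hD₁cp (isCP_replacer hσ₂.1))
        (div_nonneg (mul_nonneg (by linarith) hε₂0) ht.le)
      have p₃ := psd_real_smul (r := ε₁ * (1 - ε₂) / (1 - ε₁ * ε₂)) (isCP_tmap (isCP_replacer hσ₁.1) hD₂cp)
        (div_nonneg (mul_nonneg hε₁0 (by linarith)) ht.le)
      exact (p₁.add p₂).add p₃
    · intro M
      have e₁ := isTP_tmap hD₁tp hD₂tp M
      have e₂ := isTP_tmap hD₁tp (isTP_replacer hσ₂.2) M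
      have e₃ := isTP_tmap (isTP_replacer hσ₁.2) hD₂tp M
      simp only [LinearMap.add_apply, LinearMap.smul_apply, Matrix.trace_add, Matrix.trace_smul,
        e₁, e₂, e₃, smul_eq_mul]
      have hsum : ((1 - ε₁) * (1 - ε₂) / (1 - ε₁ * ε₂) : ℝ)
          + (1 - ε₁) * ε₂ / (1 - ε₁ * ε₂) + ε₁ * (1 - ε₂) / (1 - ε₁ * ε₂) = 1 := by
        field_simp
        ring
      have hsumC := congrArg (fun r : ℝ => (r : ℂ)) hsum
      push_cast at hsumC ⊢
      linear_combination M.trace * hsumC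
    · intro A B
      rw [hdec₁ A, hdec₂ B]
      simp only [LinearMap.add_apply, LinearMap.smul_apply, tmap_kron, replacer_apply,
        Matrix.add_kronecker, Matrix.kronecker_add, Matrix.smul_kronecker,
        Matrix.kronecker_smul, Matrix.trace_kronecker]
      have htC' : (1:ℂ) - (ε₂:ℂ) * (ε₁:ℂ) ≠ 0 := by
        intro h
        apply htC
        push_cast
        linear_combination h
      have htC'' : (1:ℂ) - (ε₁:ℂ) * (ε₂:ℂ) ≠ 0 := by
        intro h
        apply htC
        push_cast
        linear_combination h
      match_scalars <;> (push_cast; field_simp [htC', htC''])
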